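/- Let k be a field of characteristic 2 in which every element is a square (for example, a finite field or an algebraically closed field of characteristic 2), and let n ≥ 1. Then every symmetric matrix A ∈ GL(n,k) that is not alternate (i.e., has at least one nonzero diagonal entry) is congruent to the identity matrix: there exists Q ∈ GL(n,k) with Qᵀ·A·Q = Id. Consequently there is exactly one isomorphism class of outer k-involutions θ ∘ Inn_A of SL(n,k) with A symmetric non-alternate. -/

import Mathlib

open Matrix

section StmtAuxAll
variable {k : Type*} [Field k]




private lemma congr_trans {m : Type} [Fintype m] (A B C P Q : Matrix m m k)
    (hP : Pᵀ * A * P = B) (hQ : Qᵀ * B * Q = C) :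
    (P * Q)ᵀ * A * (P * Q) = C := by
  rw [transpose_mul, ← hQ, ← hP]
  simp only [Matrix.mul_assoc]

private lemma transfer {m m' : Type} [Fintype m] [DecidableEq m] [Fintype m'] [DecidableEq m']
    (e : m' ≃ m) (A : Matrix m m k)
    (h : ∃ Q, IsUnit Q.det ∧ Qᵀ * (A.submatrix e e) * Q = 1) :
    ∃ Q, IsUnit Q.det ∧ Qᵀ * A * Q = 1 := by
  obtain ⟨Q, hQd, hQ⟩ := h
  refine ⟨Q.submatrix e.symm e.symm, ?_, ?_⟩
  · rwa [det_submatrix_equiv_self]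
  · have hA : A = (A.submatrix e e).submatrix e.symm e.symm := by
      simp [submatrix_submatrix]
    rw [transpose_submatrix, hA,
      show (Qᵀ.submatrix ⇑e.symm ⇑e.symm) * ((A.submatrix ⇑e ⇑e).submatrix ⇑e.symm ⇑e.symm) *
          Q.submatrix ⇑e.symm ⇑e.symm
        = (Qᵀ * A.submatrix ⇑e ⇑e * Q).submatrix ⇑e.symm ⇑e.symm from by
        rw [submatrix_mul_equiv, submatrix_mul_equiv],
      hQ, submatrix_one_equiv]




private lemma clear_step {s₁ s₂ : Type} [Fintype s₁] [Fintype s₂] [DecidableEq s₁]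
    [DecidableEq s₂] [Unique s₁]
    (M : Matrix (s₁ ⊕ s₂) (s₁ ⊕ s₂) k) (hM : Mᵀ = M) (hdet : IsUnit M.det)
    {a : k} (ha : a ≠ 0) (h11 : M.toBlocks₁₁ = a • (1 : Matrix s₁ s₁ k)) :
    ∃ (E : Matrix (s₁ ⊕ s₂) (s₁ ⊕ s₂) k) (S : Matrix s₂ s₂ k),
      IsUnit E.det ∧ Eᵀ * M * E = fromBlocks (a • (1 : Matrix s₁ s₁ k)) 0 0 S ∧
      Sᵀ = S ∧ IsUnit S.det ∧
      ∀ j j' : s₂, S j j' = M (Sum.inr j) (Sum.inr j') -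
        a⁻¹ * (M (Sum.inr j) (Sum.inl default) * M (Sum.inl default) (Sum.inr j')) := by
  have hs : ∀ x y, M x y = M y x := fun x y => by
    conv_lhs => rw [← hM, transpose_apply]
  set Bb := M.toBlocks₁₂ with hBb
  set Cc := M.toBlocks₂₁ with hCc
  set D := M.toBlocks₂₂ with hD
  have hMblocks : M = fromBlocks (a • 1) Bb Cc D := by
    rw [← h11, hBb, hCc, hD, fromBlocks_toBlocks]
  have hBbCc : Ccᵀ = Bb := by
    ext u j
    simp only [transpose_apply, hCc, hBb, toBlocks₂₁, toBlocks₁₂, of_apply]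
    exact hs _ _
  have hCcBb : Bbᵀ = Cc := by rw [← hBbCc, transpose_transpose]
  have hDD : Dᵀ = D := by
    ext u j
    simp only [transpose_apply, hD, toBlocks₂₂, of_apply]
    exact hs _ _
  obtain ⟨E0, hE0⟩ : ∃ E0 : Matrix (s₁ ⊕ s₂) (s₁ ⊕ s₂) k,
      E0 = fromBlocks 1 (-(a⁻¹ • Bb)) 0 1 := ⟨_, rfl⟩
  set S := D - a⁻¹ • (Cc * Bb) with hS
  have hEd : IsUnit E0.det := by
    rw [hE0, det_fromBlocks_zero₂₁, det_one, det_one, one_mul]; exact isUnit_one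
  have hEME : E0ᵀ * M * E0 = fromBlocks (a • (1 : Matrix s₁ s₁ k)) 0 0 S := by
    have hEt : E0ᵀ = fromBlocks 1 0 (-(a⁻¹ • Cc)) 1 := by
      rw [hE0, fromBlocks_transpose, transpose_one, transpose_one, transpose_zero, transpose_neg,
        transpose_smul, hCcBb]
    rw [hEt, hE0, hMblocks, fromBlocks_multiply, fromBlocks_multiply]
    simp only [Matrix.one_mul, Matrix.mul_one, Matrix.zero_mul, Matrix.mul_zero, add_zero,
      zero_add, Matrix.neg_mul, Matrix.mul_neg, Matrix.smul_mul, Matrix.mul_smul, smul_smul,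
      smul_neg, neg_neg, inv_mul_cancel₀ ha, mul_inv_cancel₀ ha, one_smul, neg_add_cancel,
      neg_add_eq_sub, smul_zero, sub_zero]
    rfl
  refine ⟨E0, S, hEd, hEME, ?_, ?_, ?_⟩
  · rw [hS, transpose_sub, transpose_smul, transpose_mul, hDD, hCcBb, hBbCc]
  · have h1 : IsUnit (fromBlocks (a • (1 : Matrix s₁ s₁ k)) 0 0 S).det := by
      rw [← hEME, det_mul, det_mul, det_transpose]
      exact (hEd.mul hdet).mul hEd
    rw [det_fromBlocks_zero₂₁] at h1
    exact isUnit_of_mul_isUnit_right h1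
  · intro j j'
    simp only [hS, Matrix.sub_apply, Matrix.smul_apply, Matrix.mul_apply, smul_eq_mul]
    rw [Fintype.sum_unique]
    rfl



private lemma assemble {s₁ s₂ : Type} [Fintype s₁] [Fintype s₂] [DecidableEq s₁]
    [DecidableEq s₂] (hsq : ∀ x : k, ∃ y : k, y ^ 2 = x) {a : k} (ha : a ≠ 0)
    (S : Matrix s₂ s₂ k) (Q : Matrix s₂ s₂ k) (hQd : IsUnit Q.det) (hQ : Qᵀ * S * Q = 1) :
    ∃ D : Matrix (s₁ ⊕ s₂) (s₁ ⊕ s₂) k, IsUnit D.det ∧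
      Dᵀ * fromBlocks (a • (1 : Matrix s₁ s₁ k)) 0 0 S * D = 1 := by
  obtain ⟨y, hy⟩ := hsq a⁻¹
  have hy0 : y ≠ 0 := by
    intro h
    rw [h] at hy
    exact inv_ne_zero ha (by simpa using hy.symm)
  obtain ⟨D0, hD0⟩ : ∃ D0 : Matrix (s₁ ⊕ s₂) (s₁ ⊕ s₂) k,
      D0 = fromBlocks (y • 1) 0 0 Q := ⟨_, rfl⟩
  refine ⟨D0, ?_, ?_⟩
  · rw [hD0, det_fromBlocks_zero₂₁, det_smul, det_one, mul_one]
    exact ((hy0.isUnit).pow _).mul hQd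
  · have hDt : D0ᵀ = fromBlocks (y • 1) 0 0 Qᵀ := by
      rw [hD0, fromBlocks_transpose, transpose_smul, transpose_one, transpose_zero,
        transpose_zero]
    rw [hDt, hD0, fromBlocks_multiply, fromBlocks_multiply]
    simp only [Matrix.one_mul, Matrix.mul_one, Matrix.zero_mul, Matrix.mul_zero, add_zero,
      zero_add, Matrix.smul_mul, Matrix.mul_smul, smul_smul, smul_zero]
    have hya : y * (a * y) = 1 := by
      rw [mul_comm a y, ← mul_assoc, ← pow_two, hy, inv_mul_cancel₀ ha]
    rw [hya, one_smul, hQ, fromBlocks_one]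

private lemma stdBasis_transpose {m : Type} [DecidableEq m] (i j : m) (c : k) :
    (single i j c)ᵀ = single j i c := by
  ext x y
  simp [single, transpose_apply, and_comm]

private lemma part2aux {m : Type} [Fintype m] [DecidableEq m]
    (A B C X : Matrix m m k) (hA : Aᵀ = A) (hB : Bᵀ = B)
    (hAd : IsUnit A.det) (hBd : IsUnit B.det) (hCd : IsUnit C.det)
    (hK : C * A⁻¹ * Cᵀ = B⁻¹) :
    C * ((A * (C⁻¹ * X * C) * A⁻¹)ᵀ)⁻¹ * C⁻¹ = ((B * X * B⁻¹)ᵀ)⁻¹ := by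
  simp only [transpose_mul, Matrix.mul_inv_rev, transpose_nonsing_inv]
  rw [hA, hB]
  rw [Matrix.nonsing_inv_nonsing_inv A hAd, Matrix.nonsing_inv_nonsing_inv B hBd]
  have hCtd : IsUnit Cᵀ.det := by rwa [det_transpose]
  rw [Matrix.nonsing_inv_nonsing_inv Cᵀ hCtd]
  have h2 : Cᵀ⁻¹ * A * C⁻¹ = B := by
    have h3 := congrArg (fun Z : Matrix m m k => Z⁻¹) hK
    simp only [Matrix.mul_inv_rev, Matrix.nonsing_inv_nonsing_inv A hAd,
      Matrix.nonsing_inv_nonsing_inv B hBd] at h3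
    rw [← Matrix.mul_assoc] at h3
    exact h3
  rw [← hK, ← h2]
  simp only [Matrix.mul_assoc]
set_option maxHeartbeats 1000000 in
private lemma key (hsq : ∀ x : k, ∃ y : k, y ^ 2 = x) :
    ∀ (N : ℕ) (m : Type) [Fintype m] [DecidableEq m] (A : Matrix m m k),
      Fintype.card m ≤ N → IsUnit A.det → Aᵀ = A →
      ((∃ i, A i i ≠ 0) ∨ IsEmpty m) →
      ∃ Q : Matrix m m k, IsUnit Q.det ∧ Qᵀ * A * Q = 1 := by
  intro N
  induction N with
  | zero =>
    intro m _ _ A hcard _ _ _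
    haveI : IsEmpty m := Fintype.card_eq_zero_iff.mp (Nat.le_zero.mp hcard)
    exact ⟨1, by simp, by ext i j; exact isEmptyElim i⟩
  | succ N IH =>
    intro m _ _ A hcard hdet hsymm hnonalt
    rcases isEmpty_or_nonempty m with hm | hm
    · exact ⟨1, by simp, by ext i j; exact isEmptyElim i⟩
    obtain ⟨i₀, hi₀⟩ := hnonalt.resolve_right (not_isEmpty_of_nonempty m)
    haveI : Unique {x : m // x = i₀} := ⟨⟨⟨i₀, rfl⟩⟩, fun x => Subtype.ext x.2⟩
    set e : ({x : m // x = i₀} ⊕ {x : m // ¬ x = i₀}) ≃ m := Equiv.sumCompl (· = i₀) with he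
    set M : Matrix _ _ k := A.submatrix e e with hMdef
    have hcard₂ : Fintype.card {x : m // ¬ x = i₀} ≤ N := by
      have h1 : Fintype.card {x : m // x = i₀} = 1 := Fintype.card_subtype_eq i₀
      have h2 := Fintype.card_subtype_compl (fun x : m => x = i₀)
      have h3 : 1 ≤ Fintype.card m := Fintype.card_pos
      omega
    have hMsymm : Mᵀ = M := by rw [hMdef, transpose_submatrix, hsymm]
    have hMdet : IsUnit M.det := by rw [hMdef, det_submatrix_equiv_self]; exact hdet
    have hMdd : M (Sum.inl (default : {x : m // x = i₀}))
        (Sum.inl (default : {x : m // x = i₀})) = A i₀ i₀ := by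
      rw [hMdef]
      simp only [submatrix_apply, he, Equiv.sumCompl_apply_inl]
      have hd : ((default : {x : m // x = i₀}) : m) = i₀ := (default : {x : m // x = i₀}).2
      rw [hd]
    have hM11 : M.toBlocks₁₁
        = (A i₀ i₀) • (1 : Matrix {x : m // x = i₀} {x : m // x = i₀} k) := by
      ext u v
      have hu : u = default := Subsingleton.elim _ _
      have hv : v = default := Subsingleton.elim _ _
      subst hu; subst hv
      simp only [toBlocks₁₁, of_apply, Matrix.smul_apply, Matrix.one_apply_eq, smul_eq_mul,
        mul_one]
      exact hMdd
    obtain ⟨E, S, hEd, hEME, hSsymm, hSdet, hSform⟩ := clear_step M hMsymm hMdet hi₀ hM11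
    by_cases hScase : (∃ j, S j j ≠ 0) ∨ IsEmpty {x : m // ¬ x = i₀}
    · obtain ⟨QS, hQSd, hQS⟩ := IH _ S hcard₂ hSdet hSsymm hScase
      obtain ⟨D, hDd, hD⟩ := assemble (s₁ := {x : m // x = i₀}) hsq hi₀ S QS hQSd hQS
      refine transfer e A ⟨E * D, ?_, congr_trans _ _ _ _ _ hEME hD⟩
      rw [det_mul]; exact hEd.mul hDd
    · push_neg at hScase
      obtain ⟨halt, hne⟩ := hScase
      haveI hs₂ : Nonempty {x : m // ¬ x = i₀} := hne
      have hSne : ∃ p q, S p q ≠ 0 := by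
        by_contra h
        push_neg at h
        have hS0 : S = 0 := by ext p q; exact h p q
        rw [hS0, det_zero] at hSdet
        simp at hSdet
      obtain ⟨p, q, hpq⟩ := hSne
      obtain ⟨T, hT⟩ : ∃ T, T = (1 : Matrix ({x : m // x = i₀} ⊕ {x : m // ¬ x = i₀})
          ({x : m // x = i₀} ⊕ {x : m // ¬ x = i₀}) k)
          + single (Sum.inr p) (Sum.inl default) 1 := ⟨_, rfl⟩
      have hTd : IsUnit T.det := by
        rw [hT, show (1 : Matrix _ _ k) + single (Sum.inr p) (Sum.inl default) 1
            = Matrix.transvection (Sum.inr p) (Sum.inl default) 1 from rfl,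
          det_transvection_of_ne _ _ (by simp) 1]
        exact isUnit_one
      set M₂ := fromBlocks ((A i₀ i₀) • (1 : Matrix {x : m // x = i₀} {x : m // x = i₀} k))
        0 0 S with hM₂
      have hM₂symm : M₂ᵀ = M₂ := by
        rw [hM₂, fromBlocks_transpose, transpose_smul, transpose_one, transpose_zero,
          transpose_zero, hSsymm]
      have hM₂det : IsUnit M₂.det := by
        rw [← hEME, det_mul, det_mul, det_transpose]
        exact (hEd.mul hMdet).mul hEd
      set Nn := Tᵀ * M₂ * T with hNn
      have hMT : ∀ x y, (M₂ * T) x y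
          = M₂ x y + if y = Sum.inl default then M₂ x (Sum.inr p) else 0 := by
        intro x y
        rw [hT, Matrix.mul_add, Matrix.mul_one, Matrix.add_apply]
        congr 1
        by_cases hy : y = Sum.inl default
        · subst hy
          rw [if_pos rfl, mul_single_apply_same, mul_one]
        · rw [if_neg hy]
          exact mul_single_apply_of_ne 1 _ _ x y hy _
      have hNentry : ∀ x y, Nn x y
          = (M₂ * T) x y + if x = Sum.inl default then (M₂ * T) (Sum.inr p) y else 0 := by
        intro x y
        rw [hNn, Matrix.mul_assoc, hT, transpose_add, transpose_one, stdBasis_transpose,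
          Matrix.add_mul, Matrix.one_mul, Matrix.add_apply]
        congr 1
        by_cases hx : x = Sum.inl default
        · subst hx
          rw [if_pos rfl, single_mul_apply_same, one_mul]
        · rw [if_neg hx]
          exact single_mul_apply_of_ne 1 _ _ x y hx _
      -- entries of M₂
      have hM₂cc : M₂ (Sum.inl default) (Sum.inl default) = A i₀ i₀ := by
        rw [hM₂]
        show ((A i₀ i₀) • (1 : Matrix {x : m // x = i₀} {x : m // x = i₀} k))
          default default = A i₀ i₀
        simp
      have hM₂cr : M₂ (Sum.inl default) (Sum.inr p) = 0 := by rw [hM₂]; rfl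
      have hM₂rc : M₂ (Sum.inr p) (Sum.inl default) = 0 := by rw [hM₂]; rfl
      have hM₂jj : ∀ j j', M₂ (Sum.inr j) (Sum.inr j') = S j j' := by
        intro j j'; rw [hM₂]; rfl
      have hjc : ∀ j : {x : m // ¬ x = i₀},
          (Sum.inr j : {x : m // x = i₀} ⊕ {x : m // ¬ x = i₀}) ≠ Sum.inl default := by
        intro j; simp
      -- N entries
      have hNcc : Nn (Sum.inl default) (Sum.inl default) = A i₀ i₀ := by
        rw [hNentry, if_pos rfl, hMT, if_pos rfl, hMT, if_pos rfl, hM₂cc, hM₂cr, hM₂rc,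
          hM₂jj, halt p]
        ring
      have hNjc : ∀ j, Nn (Sum.inr j) (Sum.inl default) = S j p := by
        intro j
        rw [hNentry, if_neg (hjc j), hMT, if_pos rfl]
        rw [show M₂ (Sum.inr j) (Sum.inl default) = 0 from by rw [hM₂]; rfl, hM₂jj]
        ring
      have hNcj : ∀ j, Nn (Sum.inl default) (Sum.inr j) = S p j := by
        intro j
        rw [hNentry, if_pos rfl, hMT, if_neg (hjc j), hMT, if_neg (hjc j)]
        rw [show M₂ (Sum.inl default) (Sum.inr j) = 0 from by rw [hM₂]; rfl, hM₂jj]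
        ring
      have hNjj : ∀ j j', Nn (Sum.inr j) (Sum.inr j') = S j j' := by
        intro j j'
        rw [hNentry, if_neg (hjc j), hMT, if_neg (hjc j'), hM₂jj]
        ring
      have hNsymm : Nnᵀ = Nn := by
        rw [hNn, transpose_mul, transpose_mul, transpose_transpose, hM₂symm, Matrix.mul_assoc]
      have hNdet : IsUnit Nn.det := by
        rw [hNn, det_mul, det_mul, det_transpose]
        exact (hTd.mul hM₂det).mul hTd
      have hN11 : Nn.toBlocks₁₁
          = (A i₀ i₀) • (1 : Matrix {x : m // x = i₀} {x : m // x = i₀} k) := by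
        ext u v
        have hu : u = default := Subsingleton.elim _ _
        have hv : v = default := Subsingleton.elim _ _
        subst hu; subst hv
        simp only [toBlocks₁₁, of_apply, Matrix.smul_apply, Matrix.one_apply_eq, smul_eq_mul,
          mul_one]
        exact hNcc
      obtain ⟨E₂, S₂, hE₂d, hE₂N, hS₂symm, hS₂det, hS₂form⟩ :=
        clear_step Nn hNsymm hNdet hi₀ hN11
      have hSqp : S q p = S p q := by
        conv_lhs => rw [← hSsymm, transpose_apply]
      have hS₂qq : S₂ q q ≠ 0 := by
        rw [hS₂form q q, hNjj, hNjc, hNcj, halt q, hSqp, zero_sub]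
        exact neg_ne_zero.mpr (mul_ne_zero (inv_ne_zero hi₀) (mul_ne_zero hpq hpq))
      obtain ⟨QS, hQSd, hQS⟩ := IH _ S₂ hcard₂ hS₂det hS₂symm (Or.inl ⟨q, hS₂qq⟩)
      obtain ⟨D, hDd, hD⟩ := assemble (s₁ := {x : m // x = i₀}) hsq hi₀ S₂ QS hQSd hQS
      have c1 : (E * T)ᵀ * M * (E * T) = Nn :=
        congr_trans _ _ _ _ _ hEME hNn.symm
      have c2 := congr_trans _ _ _ _ _ c1 hE₂N
      have c3 := congr_trans _ _ _ _ _ c2 hD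
      refine transfer e A ⟨E * T * E₂ * D, ?_, c3⟩
      rw [det_mul, det_mul, det_mul]
      exact (((hEd.mul hTd)).mul hE₂d).mul hDd

end StmtAuxAll

set_option maxHeartbeats 1600000

/-- Let k be a field of characteristic 2 in which every element
is a square, and n ≥ 1. Then every symmetric non-alternate A ∈ GL(n,k) (i.e.
with some nonzero diagonal entry) is congruent to the identity matrix.
Consequently, with θ(X) = (Xᵀ)⁻¹, any two outer involutions θ ∘ Inn_A,
θ ∘ Inn_B of SL(n,k) with A, B symmetric non-alternate are isomorphic. -/
theorem stmt_18 {k : Type*} [Field k] [CharP k 2]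
    (hsq : ∀ x : k, ∃ y : k, y ^ 2 = x) {n : ℕ} (hn : 1 ≤ n) :
    (∀ A : (Matrix (Fin n) (Fin n) k)ˣ,
        (A : Matrix (Fin n) (Fin n) k)ᵀ = (A : Matrix (Fin n) (Fin n) k) →
        (∃ i : Fin n, (A : Matrix (Fin n) (Fin n) k) i i ≠ 0) →
        ∃ Q : (Matrix (Fin n) (Fin n) k)ˣ,
          (Q : Matrix (Fin n) (Fin n) k)ᵀ * (A : Matrix (Fin n) (Fin n) k) *
            (Q : Matrix (Fin n) (Fin n) k) = 1) ∧
      (∀ A B : (Matrix (Fin n) (Fin n) k)ˣ,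
        (A : Matrix (Fin n) (Fin n) k)ᵀ = (A : Matrix (Fin n) (Fin n) k) →
        (∃ i : Fin n, (A : Matrix (Fin n) (Fin n) k) i i ≠ 0) →
        (B : Matrix (Fin n) (Fin n) k)ᵀ = (B : Matrix (Fin n) (Fin n) k) →
        (∃ i : Fin n, (B : Matrix (Fin n) (Fin n) k) i i ≠ 0) →
        ∃ C : (Matrix (Fin n) (Fin n) k)ˣ, ∀ X : Matrix (Fin n) (Fin n) k, X.det = 1 →
          (C : Matrix (Fin n) (Fin n) k) *
            (((A : Matrix (Fin n) (Fin n) k) *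
              ((↑C⁻¹ : Matrix (Fin n) (Fin n) k) * X * (C : Matrix (Fin n) (Fin n) k)) *
              (↑A⁻¹ : Matrix (Fin n) (Fin n) k))ᵀ)⁻¹ *
            (↑C⁻¹ : Matrix (Fin n) (Fin n) k) =
          (((B : Matrix (Fin n) (Fin n) k) * X *
            (↑B⁻¹ : Matrix (Fin n) (Fin n) k))ᵀ)⁻¹) := by
  have part1 : ∀ A : (Matrix (Fin n) (Fin n) k)ˣ,
      (A : Matrix (Fin n) (Fin n) k)ᵀ = (A : Matrix (Fin n) (Fin n) k) →
      (∃ i : Fin n, (A : Matrix (Fin n) (Fin n) k) i i ≠ 0) →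
      ∃ Q : Matrix (Fin n) (Fin n) k, IsUnit Q.det ∧
        Qᵀ * (A : Matrix (Fin n) (Fin n) k) * Q = 1 := by
    intro A hA hA'
    exact key hsq n (Fin n) (↑A) (by simp)
      ((Matrix.isUnit_iff_isUnit_det _).mp A.isUnit) hA (Or.inl hA')
  constructor
  · intro A hA hA'
    obtain ⟨Q, hQd, hQ⟩ := part1 A hA hA'
    have hQu : IsUnit Q := (Matrix.isUnit_iff_isUnit_det _).mpr hQd
    exact ⟨hQu.unit, by rw [hQu.unit_spec]; exact hQ⟩
  · intro A B hA hA' hB hB'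
    obtain ⟨Q, hQd, hQ⟩ := part1 A hA hA'
    obtain ⟨R, hRd, hR⟩ := part1 B hB hB'
    have hQu : IsUnit Q := (Matrix.isUnit_iff_isUnit_det _).mpr hQd
    have hRu : IsUnit R := (Matrix.isUnit_iff_isUnit_det _).mpr hRd
    have hAd : IsUnit ((A : Matrix (Fin n) (Fin n) k)).det :=
      (Matrix.isUnit_iff_isUnit_det _).mp A.isUnit
    have hBd : IsUnit ((B : Matrix (Fin n) (Fin n) k)).det :=
      (Matrix.isUnit_iff_isUnit_det _).mp B.isUnit
    have hQtd : IsUnit (Qᵀ).det := by rwa [det_transpose]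
    have hCmu : IsUnit (R * Q⁻¹) := by
      have h : Q⁻¹ = ↑hQu.unit⁻¹ := by rw [Matrix.coe_units_inv, hQu.unit_spec]
      rw [h]; exact hRu.mul (Units.isUnit _)
    have hCd : IsUnit (R * Q⁻¹).det := (Matrix.isUnit_iff_isUnit_det _).mp hCmu
    have hAinv : ((A : Matrix (Fin n) (Fin n) k))⁻¹ = Q * Qᵀ := by
      have h1 : Q⁻¹ = Qᵀ * (A : Matrix (Fin n) (Fin n) k) := Matrix.inv_eq_left_inv hQ
      apply Matrix.inv_eq_left_inv
      rw [Matrix.mul_assoc, ← h1, mul_nonsing_inv Q hQd]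
    have hBinv : ((B : Matrix (Fin n) (Fin n) k))⁻¹ = R * Rᵀ := by
      have h1 : R⁻¹ = Rᵀ * (B : Matrix (Fin n) (Fin n) k) := Matrix.inv_eq_left_inv hR
      apply Matrix.inv_eq_left_inv
      rw [Matrix.mul_assoc, ← h1, mul_nonsing_inv R hRd]
    have hK : (R * Q⁻¹) * ((A : Matrix (Fin n) (Fin n) k))⁻¹ * (R * Q⁻¹)ᵀ
        = ((B : Matrix (Fin n) (Fin n) k))⁻¹ := by
      rw [hAinv, transpose_mul, transpose_nonsing_inv, hBinv]
      rw [show R * Q⁻¹ * (Q * Qᵀ) * (Qᵀ⁻¹ * Rᵀ)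
          = R * ((Q⁻¹ * Q) * (Qᵀ * (Qᵀ⁻¹ * Rᵀ))) from by simp only [Matrix.mul_assoc]]
      rw [nonsing_inv_mul Q hQd, Matrix.one_mul, ← Matrix.mul_assoc Qᵀ Qᵀ⁻¹ Rᵀ,
        mul_nonsing_inv Qᵀ hQtd, Matrix.one_mul]
    refine ⟨hCmu.unit, ?_⟩
    intro X hX
    simp only [Matrix.coe_units_inv, IsUnit.unit_spec]
    exact part2aux (m := Fin n) ((A : Matrix (Fin n) (Fin n) k)) ((B : Matrix (Fin n) (Fin n) k)) (R * Q⁻¹) X hA hB hAd hBd hCd hK
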